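/- On any finite input graph, the Cumulative NDFS algorithm always terminates: every invocation of OuterDFS strictly increases the set Outer and every invocation of InnerDFS strictly increases the set Inner, and both sets are bounded by the finite set of states, so the computation cannot proceed infinitely. -/

import Mathlib

namespace PTASynth

open Relation

variable {L P : Type} {n : ℕ} [Fintype P]

/-! ### Affine expressions over parameters -/

/-- Affine expressions `z₀ + z₁p₁ + … + zₘpₘ` with integer coefficients. -/
structure AffExpr (P : Type) where
  const : ℤ
  coef : P → ℤ

noncomputable def AffExpr.eval (e : AffExpr P) (v : P → ℤ) : ℤ :=
  e.const + ∑ p, e.coef p * v p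

instance : Add (AffExpr P) :=
  ⟨fun e f => ⟨e.const + f.const, fun p => e.coef p + f.coef p⟩⟩

def AffExpr.ofInt (z : ℤ) : AffExpr P := ⟨z, fun _ => 0⟩

open Classical in
noncomputable def AffExpr.var (p : P) : AffExpr P :=
  ⟨0, fun q => if q = p then 1 else 0⟩

/-- `max_{lb,ub}(e)`: replace positively occurring parameters by their upper bound and
negatively occurring ones by their lower bound. -/
noncomputable def AffExpr.maxVal (e : AffExpr P) (lb ub : P → ℤ) : ℤ :=
  e.const + ∑ p, (if 0 ≤ e.coef p then e.coef p * ub p else e.coef p * lb p)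

/-- Extended affine expressions: `none` denotes `∞`. -/
abbrev EExpr (P : Type) := Option (AffExpr P)

noncomputable def EExpr.eval (e : EExpr P) (v : P → ℤ) : WithTop ℤ :=
  match e with
  | none => ⊤
  | some e => (AffExpr.eval e v : WithTop ℤ)

def EExpr.add : EExpr P → EExpr P → EExpr P
  | some e, some f => some (e + f)
  | _, _ => none

/-! ### Parameter constraints -/

/-- Relation symbols for parameter constraints. -/
inductive CRel | lt | le | ge | gt
deriving DecidableEq

def CRel.holds : CRel → WithTop ℤ → WithTop ℤ → Prop
  | .lt, a, b => a < b
  | .le, a, b => a ≤ b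
  | .ge, a, b => b ≤ a
  | .gt, a, b => b < a

def CRel.negRel : CRel → CRel
  | .lt => .ge
  | .le => .gt
  | .ge => .lt
  | .gt => .le

/-- A parameter constraint `e ∼ e'`. -/
structure Constr (P : Type) where
  lhs : EExpr P
  rel : CRel
  rhs : EExpr P

def Constr.neg (c : Constr P) : Constr P := ⟨c.lhs, c.rel.negRel, c.rhs⟩

def Constr.sat (c : Constr P) (v : P → ℤ) : Prop :=
  c.rel.holds (EExpr.eval c.lhs v) (EExpr.eval c.rhs v)

/-- `⟦C⟧`: the set of parameter valuations satisfying a constraint set. -/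
def csem (C : Set (Constr P)) : Set (P → ℤ) :=
  {v | ∀ c ∈ C, c.sat v}

/-- `C ⊨ c`: the constraint `c` covers the constraint set `C`. -/
def Covers (C : Set (Constr P)) (c : Constr P) : Prop :=
  ∀ v ∈ csem C, c.sat v

/-! ### Clock valuations -/

/-- Clock valuations over clocks `Fin (n+1)`, clock `0` is the zero clock `x₀`. -/
structure ClockVal (n : ℕ) where
  val : Fin (n + 1) → ℝ
  zero_eq : val 0 = 0
  nonneg : ∀ x, 0 ≤ val x

def ClockVal.zeroVal (n : ℕ) : ClockVal n := ⟨fun _ => 0, rfl, fun _ => le_refl 0⟩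

open Classical in
/-- `η⟨R⟩`: reset the clocks in `R` to `0`. -/
noncomputable def ClockVal.reset (η : ClockVal n) (R : Set (Fin (n + 1))) : ClockVal n where
  val x := if x = 0 ∨ x ∈ R then 0 else η.val x
  zero_eq := by simp
  nonneg x := by
    try dsimp only
    split
    · exact le_rfl
    · exact η.nonneg x

/-! ### Guards -/

/-- A bound `(≺, e)` with `≺ ∈ {≤, <}` (`true` means `≤`) and `e ∈ E(P) ∪ {∞}`. -/
abbrev Bnd (P : Type) := Bool × EExpr P

def Bnd.sat (b : Bnd P) (v : P → ℤ) (r : ℝ) : Prop :=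
  match b.2 with
  | none => True
  | some e => if b.1 then r ≤ (AffExpr.eval e v : ℝ) else r < (AffExpr.eval e v : ℝ)

/-- An atomic guard `xᵢ - xⱼ ≺ e`. -/
structure Atom (n : ℕ) (P : Type) where
  i : Fin (n + 1)
  j : Fin (n + 1)
  le : Bool
  e : EExpr P

/-- A guard is a finite conjunction of atomic guards. -/
abbrev Guard (n : ℕ) (P : Type) := List (Atom n P)

def Atom.sat (a : Atom n P) (v : P → ℤ) (η : ClockVal n) : Prop :=
  Bnd.sat (a.le, a.e) v (η.val a.i - η.val a.j)

def Guard.sat (g : Guard n P) (v : P → ℤ) (η : ClockVal n) : Prop :=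
  ∀ a ∈ g, a.sat v η

/-- Simple guards: one of the compared clocks is the zero clock and the bound is finite. -/
def Atom.Simple (a : Atom n P) : Prop := (a.i = 0 ∨ a.j = 0) ∧ a.e ≠ none

def Guard.Simple (g : Guard n P) : Prop := ∀ a ∈ g, a.Simple

/-! ### Parametric timed (Büchi) automata -/

/-- A parametric timed automaton. -/
structure PTA (L : Type) (n : ℕ) (P : Type) where
  l0 : L
  trans : Set (L × Guard n P × Set (Fin (n + 1)) × L)
  Inv : L → Guard n P
  simple_trans : ∀ t ∈ trans, Guard.Simple t.2.1
  simple_Inv : ∀ l, Guard.Simple (Inv l)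

/-- A parametric timed Büchi automaton. -/
structure PTBA (L : Type) (n : ℕ) (P : Type) extends PTA L n P where
  F : Set L

/-! ### Concrete semantics `⟦A⟧_v` -/

abbrev CState (L : Type) (n : ℕ) := L × ClockVal n

/-- Delay transition `(l,η) →^d (l,η+d)`. -/
def DelayStep (M : PTA L n P) (v : P → ℤ) (s : CState L n) (d : ℝ) (s' : CState L n) : Prop :=
  s'.1 = s.1 ∧ 0 ≤ d ∧ (∀ x : Fin (n + 1), x ≠ 0 → s'.2.val x = s.2.val x + d) ∧
    Guard.sat (M.Inv s'.1) v s'.2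

/-- Action transition `(l,η) →^act (l',η⟨R⟩)`. -/
def ActStep (M : PTA L n P) (v : P → ℤ) (s s' : CState L n) : Prop :=
  ∃ g R, (s.1, g, R, s'.1) ∈ M.trans ∧ Guard.sat g v s.2 ∧
    s'.2 = s.2.reset R ∧ Guard.sat (M.Inv s'.1) v s'.2

/-- `s →^{act}_d s'`: an action transition followed by a delay transition. -/
def ActD (M : PTA L n P) (v : P → ℤ) (s s' : CState L n) : Prop :=
  ∃ s'' d, ActStep M v s s'' ∧ DelayStep M v s'' d s'

/-- `s →^{act₁,…,act_k}_d s'`: composition of `→^{act}_d` steps where each step is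
labelled by the location of its source state. -/
def ActDSeq (M : PTA L n P) (v : P → ℤ) : List L → CState L n → CState L n → Prop
  | [], s, s' => s = s'
  | l :: ls, s, s' => ∃ s'', s.1 = l ∧ ActD M v s s'' ∧ ActDSeq M v ls s'' s'

/-- `s (→^{act₁,…,act_k}_d)* s'`: one or more iterations of `→^{act₁,…,act_k}_d`. -/
def ActDSeqPlus (M : PTA L n P) (v : P → ℤ) (acts : List L) :
    CState L n → CState L n → Prop :=
  TransGen (ActDSeq M v acts)

/-! ### Time-abstracting simulations -/

def IsTASim (M : PTA L n P) (v : P → ℤ) (R : CState L n → CState L n → Prop) : Prop :=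
  (∀ s1 s2 s1', R s1 s2 → ActStep M v s1 s1' →
      ∃ s2', ActStep M v s2 s2' ∧ R s1' s2') ∧
  (∀ s1 s2 s1' (d1 : ℝ), R s1 s2 → DelayStep M v s1 d1 s1' →
      ∃ d2 s2', DelayStep M v s2 d2 s2' ∧ R s1' s2')

def IsTABisim (M : PTA L n P) (v : P → ℤ) (R : CState L n → CState L n → Prop) : Prop :=
  IsTASim M v R ∧ IsTASim M v (flip R)

/-- `s ≼ s'`: some time-abstracting simulation relates `s` to `s'`. -/
def Sim (M : PTA L n P) (v : P → ℤ) (s s' : CState L n) : Prop :=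
  ∃ R, IsTASim M v R ∧ R s s'

/-! ### Runs of `⟦A⟧_v` -/

/-- A proper run: an infinite alternating sequence of delay and action transitions,
beginning with a delay, starting in the initial state. -/
def ProperRun (A : PTBA L n P) (v : P → ℤ) (s : ℕ → CState L n) (d : ℕ → ℝ) : Prop :=
  s 0 = (A.l0, ClockVal.zeroVal n) ∧
  ∀ i, ∃ s', DelayStep A.toPTA v (s i) (d i) s' ∧ ActStep A.toPTA v s' (s (i + 1))

def AcceptingRun (A : PTBA L n P) (v : P → ℤ) (s : ℕ → CState L n) (d : ℕ → ℝ) : Prop :=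
  ProperRun A v s d ∧ ∀ N, ∃ i, N ≤ i ∧ (s i).1 ∈ A.F

/-- A run is Zeno if the sum of all its delays is finite (bounded). -/
def ZenoD (d : ℕ → ℝ) : Prop := ∃ B : ℝ, ∀ N, ∑ i ∈ Finset.range N, d i ≤ B

def HasAccRun (A : PTBA L n P) (v : P → ℤ) : Prop := ∃ s d, AcceptingRun A v s d

/-- The PTBA has no Zeno accepting runs. -/
def NoZeno (A : PTBA L n P) : Prop :=
  ∀ (v : P → ℤ) s d, AcceptingRun A v s d → ¬ ZenoD d

/-! ### (Constrained) parametric difference bound matrices -/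

/-- A parametric difference bound matrix. -/
abbrev PDBM (n : ℕ) (P : Type) := Fin (n + 1) → Fin (n + 1) → Bnd P

/-- `⟦D⟧_v`. -/
def PDBM.sem (D : PDBM n P) (v : P → ℤ) : Set (ClockVal n) :=
  {η | ∀ i j, Bnd.sat (D i j) v (η.val i - η.val j)}

/-- A constrained PDBM `(C, D)`. -/
abbrev CPDBM (n : ℕ) (P : Type) := Set (Constr P) × PDBM n P

/-- `⟦C,D⟧ = {(v,η) | v ∈ ⟦C⟧ ∧ η ∈ ⟦D⟧_v}`. -/
def CPDBM.sem (cd : CPDBM n P) : Set ((P → ℤ) × ClockVal n) :=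
  {p | p.1 ∈ csem cd.1 ∧ p.2 ∈ PDBM.sem cd.2 p.1}

open Classical in
noncomputable def PDBM.upd (D : PDBM n P) (i j : Fin (n + 1)) (b : Bnd P) : PDBM n P :=
  fun i' j' => if i' = i ∧ j' = j then b else D i' j'

/-- The constraint `e_ij (≺_ij ⟹ ≺) e` used when applying the guard atom
`x_i - x_j ≺ e` to a PDBM. -/
def atomConstr (D : PDBM n P) (a : Atom n P) : Constr P :=
  ⟨(D a.i a.j).2, if !(D a.i a.j).1 || a.le then CRel.le else CRel.lt, a.e⟩

/-- Applying a guard atom to a constrained PDBM (possibly splitting the constraint set). -/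
inductive ApplyAtom : CPDBM n P → Atom n P → CPDBM n P → Prop
  | keep (C : Set (Constr P)) (D : PDBM n P) (a : Atom n P) :
      Covers C (atomConstr D a) → ApplyAtom (C, D) a (C, D)
  | repl (C : Set (Constr P)) (D : PDBM n P) (a : Atom n P) :
      Covers C (atomConstr D a).neg →
      ApplyAtom (C, D) a (C, PDBM.upd D a.i a.j (a.le, a.e))
  | splitKeep (C : Set (Constr P)) (D : PDBM n P) (a : Atom n P) :
      ¬ Covers C (atomConstr D a) → ¬ Covers C (atomConstr D a).neg →
      ApplyAtom (C, D) a (insert (atomConstr D a) C, D)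
  | splitRepl (C : Set (Constr P)) (D : PDBM n P) (a : Atom n P) :
      ¬ Covers C (atomConstr D a) → ¬ Covers C (atomConstr D a).neg →
      ApplyAtom (C, D) a (insert (atomConstr D a).neg C, PDBM.upd D a.i a.j (a.le, a.e))

/-- Applying a conjunction of guard atoms. -/
inductive ApplyGuard : CPDBM n P → Guard n P → CPDBM n P → Prop
  | nil (cd : CPDBM n P) : ApplyGuard cd [] cd
  | cons {cd cd' cd'' : CPDBM n P} {a : Atom n P} {g : Guard n P} :
      ApplyAtom cd a cd' → ApplyGuard cd' g cd'' → ApplyGuard cd (a :: g) cd''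

open Classical in
/-- `D⟨R⟩`: resetting a set of clocks. -/
noncomputable def PDBM.reset (D : PDBM n P) (R : Set (Fin (n + 1))) : PDBM n P :=
  fun i j =>
    if i = j then D i j
    else D (if i ∈ R then 0 else i) (if j ∈ R then 0 else j)

open Classical in
/-- `D↑`: the time successor (remove all upper bounds on clocks). -/
noncomputable def PDBM.up (D : PDBM n P) : PDBM n P :=
  fun i j => if i ≠ 0 ∧ j = 0 then ((false : Bool), (none : EExpr P)) else D i j

/-- The guard atom `x_i - x_j (≺_ik ∧ ≺_kj) (e_ik + e_kj)` used by the parametric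
Floyd–Warshall canonisation. -/
def fwAtom (D : PDBM n P) (k i j : Fin (n + 1)) : Atom n P :=
  ⟨i, j, (D i k).1 && (D k j).1, EExpr.add (D i k).2 (D k j).2⟩

/-- One step of the nondeterministic parametric Floyd–Warshall algorithm. -/
inductive FWStep : ℕ × ℕ × ℕ × CPDBM n P → ℕ × ℕ × ℕ × CPDBM n P → Prop
  | relax (k i j : Fin (n + 1)) (cd cd' : CPDBM n P) :
      ApplyAtom cd (fwAtom cd.2 k i j) cd' →
      FWStep ((k : ℕ), (i : ℕ), (j : ℕ), cd) ((k : ℕ), (i : ℕ), (j : ℕ) + 1, cd')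
  | nextI (k i : Fin (n + 1)) (cd : CPDBM n P) :
      FWStep ((k : ℕ), (i : ℕ), n + 1, cd) ((k : ℕ), (i : ℕ) + 1, 0, cd)
  | nextK (k : Fin (n + 1)) (cd : CPDBM n P) :
      FWStep ((k : ℕ), n + 1, 0, cd) ((k : ℕ) + 1, 0, 0, cd)

/-- `(C',D') ∈ (C,D)_c`: membership in the canonical set. -/
def Canon (cd cd' : CPDBM n P) : Prop :=
  ReflTransGen FWStep (0, 0, 0, cd) (n + 1, 0, 0, cd')

/-! ### Symbolic semantics `⟦A⟧` -/

abbrev SymState (L : Type) (n : ℕ) (P : Type) := L × CPDBM n P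

/-- The symbolic transition relation `⟹` of `⟦A⟧`. -/
def SymStep (A : PTBA L n P) (S S' : SymState L n P) : Prop :=
  ∃ g R, (S.1, g, R, S'.1) ∈ A.trans ∧
    ∃ cd1 cd2 cd3, ApplyGuard S.2 g cd1 ∧ Canon cd1 cd2 ∧
      ApplyGuard (cd2.1, PDBM.up (PDBM.reset cd2.2 R)) (A.Inv S'.1) cd3 ∧ Canon cd3 S'.2

/-- The constraints `lb(p) ≤ p ≤ ub(p)` for all parameters `p`. -/
noncomputable def boundC (lb ub : P → ℤ) : Set (Constr P) :=
  {c | ∃ p : P, c = ⟨some (AffExpr.var p), CRel.ge, some (AffExpr.ofInt (lb p))⟩ ∨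
                c = ⟨some (AffExpr.var p), CRel.le, some (AffExpr.ofInt (ub p))⟩}

/-- The PDBM with all entries `(0, ≤)`. -/
def E0 (n : ℕ) (P : Type) : PDBM n P := fun _ _ => ((true : Bool), some (AffExpr.ofInt 0))

/-- The initial symbolic states of `⟦A⟧`. -/
def SymInit (A : PTBA L n P) (lb ub : P → ℤ) : Set (SymState L n P) :=
  {S | S.1 = A.l0 ∧ ApplyGuard (boundC lb ub, PDBM.up (E0 n P)) (A.Inv A.l0) S.2}

/-- The (reachable) symbolic states of `⟦A⟧`. -/
def SymStates (A : PTBA L n P) (lb ub : P → ℤ) : Set (SymState L n P) :=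
  {S | ∃ S0 ∈ SymInit A lb ub, ReflTransGen (SymStep A) S0 S}

/-- `s ∈_v S`: the concrete state `s` is contained in the symbolic state `S` under `v`. -/
def InV (v : P → ℤ) (s : CState L n) (S : SymState L n P) : Prop :=
  s.1 = S.1 ∧ v ∈ csem S.2.1 ∧ s.2 ∈ PDBM.sem S.2.2 v

/-! ### Abstractions -/

abbrev Abstr (L : Type) (n : ℕ) (P : Type) := SymState L n P → Set (SymState L n P)

/-- `α` is an abstraction over `⟦A⟧`. -/
def IsAbstraction (A : PTBA L n P) (α : Abstr L n P) : Prop :=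
  (∀ S Q, Q ∈ α S → Q.1 = S.1 ∧ csem Q.2.1 ⊆ csem S.2.1 ∧
      CPDBM.sem (Q.2.1, S.2.2) ⊆ CPDBM.sem Q.2) ∧
  (∀ S Q, Q ∈ α S → ∀ (v : P → ℤ) (s : CState L n), InV v s Q →
      ∃ s', InV v s' S ∧ Sim A.toPTA v s s')

/-- The transition relation `⟹^α` of the induced transition system `⟦A⟧^α`. -/
def AbsStep (A : PTBA L n P) (α : Abstr L n P) (Q Q' : SymState L n P) : Prop :=
  ∃ S, SymStep A Q S ∧ Q' ∈ α S

/-- The initial states of `⟦A⟧^α`. -/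
def AbsInit (A : PTBA L n P) (lb ub : P → ℤ) (α : Abstr L n P) : Set (SymState L n P) :=
  {Q | ∃ S ∈ SymInit A lb ub, Q ∈ α S}

/-- The states of `⟦A⟧^α`. -/
def AbsStates (A : PTBA L n P) (lb ub : P → ℤ) (α : Abstr L n P) : Set (SymState L n P) :=
  {Q | ∃ Q0 ∈ AbsInit A lb ub α, ReflTransGen (AbsStep A α) Q0 Q}

/-- The semantic content `(l, ⟦C⟧, ⟦C,D⟧)` of a symbolic state. -/
def semClass (Q : SymState L n P) : L × Set (P → ℤ) × Set ((P → ℤ) × ClockVal n) :=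
  (Q.1, csem Q.2.1, CPDBM.sem Q.2)

/-- `α` is a finite abstraction: the induced state space is finite (up to semantics). -/
def FiniteAbs (A : PTBA L n P) (lb ub : P → ℤ) (α : Abstr L n P) : Prop :=
  (semClass '' AbsStates A lb ub α).Finite

/-- There is an accepting run of `⟦A⟧^α` respecting `v`. -/
def AbsAccRun (A : PTBA L n P) (lb ub : P → ℤ) (α : Abstr L n P) (v : P → ℤ) : Prop :=
  ∃ ρ : ℕ → SymState L n P, ρ 0 ∈ AbsInit A lb ub α ∧
    (∀ i, AbsStep A α (ρ i) (ρ (i + 1))) ∧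
    (∀ i, v ∈ csem (ρ i).2.1) ∧
    (∀ N, ∃ i, N ≤ i ∧ (ρ i).1 ∈ A.F)

/-- `Q ⟹^α … ⟹^α Q'` via transitions labelled by the locations of their source states. -/
def AbsSeq (A : PTBA L n P) (α : Abstr L n P) :
    List L → SymState L n P → SymState L n P → Prop
  | [], Q, Q' => Q = Q'
  | l :: ls, Q, Q'' => ∃ Q', Q.1 = l ∧ AbsStep A α Q Q' ∧ AbsSeq A α ls Q' Q''

/-! ### The pk-extrapolation -/

def guardsOf (A : PTBA L n P) : Set (Guard n P) :=
  {g | (∃ t ∈ A.trans, t.2.1 = g) ∨ (∃ l, A.Inv l = g)}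

/-- The affine expressions compared with the clock `x` in a guard or invariant of `A`. -/
def comparedWith (A : PTBA L n P) (x : Fin (n + 1)) : Set (AffExpr P) :=
  {e | ∃ g ∈ guardsOf A, ∃ a ∈ g, (a.i = x ∨ a.j = x) ∧ a.e = some e}

/-- `M(x)`: the maximal constant with which the clock `x` is compared. -/
noncomputable def Mmax (A : PTBA L n P) (lb ub : P → ℤ) (x : Fin (n + 1)) : ℤ :=
  sSup ((fun e => AffExpr.maxVal e lb ub) '' comparedWith A x)

/-- The four possible ways the pk-extrapolation treats the entry `(i,j)` with maximal
constants `Mi = M(x_i)` and `Mj = M(x_j)`. -/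
def PkEntry (Mi Mj : ℤ) (old new : Bnd P) (c : Constr P) : Prop :=
  (new = old ∧ c = ⟨old.2, CRel.le, some (AffExpr.ofInt Mi)⟩) ∨
  (new = ((false : Bool), (none : EExpr P)) ∧ c = ⟨old.2, CRel.gt, some (AffExpr.ofInt Mi)⟩) ∨
  (new = old ∧ c = ⟨old.2, CRel.ge, some (AffExpr.ofInt (-Mj))⟩) ∨
  (new = ((false : Bool), some (AffExpr.ofInt (-Mj))) ∧
    c = ⟨old.2, CRel.lt, some (AffExpr.ofInt (-Mj))⟩)

/-- The pk-extrapolation `α_pk`. -/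
noncomputable def pkExtra (A : PTBA L n P) (lb ub : P → ℤ) : Abstr L n P :=
  fun S => {Q | Q.1 = S.1 ∧
    ∃ f : Fin (n + 1) → Fin (n + 1) → Bnd P × Constr P,
      (∀ i j, PkEntry (Mmax A lb ub i) (Mmax A lb ub j) (S.2.2 i j) (f i j).1 (f i j).2) ∧
      (∀ i j, Q.2.2 i j = (f i j).1) ∧
      Q.2.1 = S.2.1 ∪ {c | ∃ i j, c = (f i j).2}}

/-! ### Region equivalence -/

/-- The maximal constant to which the clock `x` is compared in `A|v`. -/
noncomputable def cmax (A : PTBA L n P) (v : P → ℤ) (x : Fin (n + 1)) : ℤ :=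
  sSup ((fun e => AffExpr.eval e v) '' comparedWith A x)

/-- The standard region equivalence `≡_{A|v}` on the states of `⟦A⟧_v`. -/
def RegionEquiv (A : PTBA L n P) (v : P → ℤ) (s s' : CState L n) : Prop :=
  s.1 = s'.1 ∧
  (∀ x : Fin (n + 1),
      ((cmax A v x : ℝ) < s.2.val x ∧ (cmax A v x : ℝ) < s'.2.val x) ∨
      (⌊s.2.val x⌋ = ⌊s'.2.val x⌋ ∧ (Int.fract (s.2.val x) = 0 ↔ Int.fract (s'.2.val x) = 0))) ∧
  (∀ x y : Fin (n + 1),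
      s.2.val x ≤ (cmax A v x : ℝ) → s.2.val y ≤ (cmax A v y : ℝ) →
      (Int.fract (s.2.val x) ≤ Int.fract (s.2.val y) ↔
        Int.fract (s'.2.val x) ≤ Int.fract (s'.2.val y)))

/-! ### The Cumulative NDFS algorithm -/

variable {S V : Type}

/-- A finite Büchi graph whose states carry monotone sets of parameter valuations. -/
structure NGraph (S V : Type) where
  succ : S → List S
  init : S
  acc : S → Prop
  C : S → Set V
  mono : ∀ s s', s' ∈ succ s → C s' ⊆ C s

/-- Control frames of the Cumulative NDFS machine. -/
inductive NFrame (S : Type)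
  | callOuter (s : S)
  | outer (s : S) (rest : List S)
  | outerPop (s : S)
  | callInner (s : S)
  | inner (s : S) (rest : List S)

/-- Configurations of the Cumulative NDFS machine. -/
structure NConfig (S V : Type) where
  found : Set V
  outer : Set S
  inner : Set S
  stack : Set S
  ctrl : List (NFrame S)

/-- Small-step semantics of the Cumulative NDFS algorithm. -/
inductive NStep (G : NGraph S V) : NConfig S V → NConfig S V → Prop
  | callOuter (F O I St s k) :
      NStep G ⟨F, O, I, St, .callOuter s :: k⟩
              ⟨F, insert s O, I, insert s St, .outer s (G.succ s) :: k⟩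
  | outerSkip (F O I St s s' rest k) :
      (s' ∈ O ∨ s' ∈ St ∨ G.C s' ⊆ F) →
      NStep G ⟨F, O, I, St, .outer s (s' :: rest) :: k⟩
              ⟨F, O, I, St, .outer s rest :: k⟩
  | outerRec (F O I St s s' rest k) :
      s' ∉ O → s' ∉ St → ¬ G.C s' ⊆ F →
      NStep G ⟨F, O, I, St, .outer s (s' :: rest) :: k⟩
              ⟨F, O, I, St, .callOuter s' :: .outer s rest :: k⟩
  | outerAcc (F O I St s k) :
      G.acc s → ¬ G.C s ⊆ F →
      NStep G ⟨F, O, I, St, .outer s [] :: k⟩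
              ⟨F, O, I, St, .callInner s :: .outerPop s :: k⟩
  | outerDone (F O I St s k) :
      ¬ (G.acc s ∧ ¬ G.C s ⊆ F) →
      NStep G ⟨F, O, I, St, .outer s [] :: k⟩ ⟨F, O, I, St \ {s}, k⟩
  | outerPop (F O I St s k) :
      NStep G ⟨F, O, I, St, .outerPop s :: k⟩ ⟨F, O, I, St \ {s}, k⟩
  | callInner (F O I St s k) :
      NStep G ⟨F, O, I, St, .callInner s :: k⟩
              ⟨F, O, insert s I, St, .inner s (G.succ s) :: k⟩
  | innerFound (F O I St s s' rest k) :
      s' ∈ St →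
      NStep G ⟨F, O, I, St, .inner s (s' :: rest) :: k⟩ ⟨F ∪ G.C s', O, I, St, k⟩
  | innerRec (F O I St s s' rest k) :
      s' ∉ St → s' ∉ I → ¬ G.C s' ⊆ F →
      NStep G ⟨F, O, I, St, .inner s (s' :: rest) :: k⟩
              ⟨F, O, I, St, .callInner s' :: .inner s rest :: k⟩
  | innerSkip (F O I St s s' rest k) :
      s' ∉ St → (s' ∈ I ∨ G.C s' ⊆ F) →
      NStep G ⟨F, O, I, St, .inner s (s' :: rest) :: k⟩ ⟨F, O, I, St, .inner s rest :: k⟩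
  | innerDone (F O I St s k) :
      NStep G ⟨F, O, I, St, .inner s [] :: k⟩ ⟨F, O, I, St, k⟩

/-- The initial configuration of the Cumulative NDFS algorithm. -/
def initConfig (G : NGraph S V) : NConfig S V := ⟨∅, ∅, ∅, ∅, [.callOuter G.init]⟩

/-- The edge relation of the graph. -/
def Edge (G : NGraph S V) (s s' : S) : Prop := s' ∈ G.succ s

/-- One edge of a cycle under the valuation `v`: both endpoints carry `v`. -/
def StepUnder (G : NGraph S V) (v : V) (s s' : S) : Prop :=
  s' ∈ G.succ s ∧ v ∈ G.C s ∧ v ∈ G.C s'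

/-- The step from `c` to `c'` backtracks (in `OuterDFS`) from the state `q`. -/
def Backtracks (G : NGraph S V) (q : S) (c c' : NConfig S V) : Prop :=
  NStep G c c' ∧
    ((∃ k, c.ctrl = NFrame.outer q [] :: k ∧ c'.ctrl = k) ∨
     (∃ k, c.ctrl = NFrame.outerPop q :: k))


/-! ### Auxiliary development for the termination proof -/

/-- The stack states contributed by a single control frame. -/
def fstk : NFrame S → List S
  | .outer s _ => [s]
  | .outerPop s => [s]
  | _ => []

/-- The stack states of a control stack, in order. -/
def stk : List (NFrame S) → List S
  | [] => []
  | f :: k => fstk f ++ stk k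

@[simp] lemma stk_nil : stk ([] : List (NFrame S)) = [] := rfl
@[simp] lemma stk_cons (f : NFrame S) (k : List (NFrame S)) :
    stk (f :: k) = fstk f ++ stk k := rfl
@[simp] lemma fstk_callOuter (s : S) : fstk (NFrame.callOuter s) = [] := rfl
@[simp] lemma fstk_outer (s : S) (r : List S) : fstk (NFrame.outer s r) = [s] := rfl
@[simp] lemma fstk_outerPop (s : S) : fstk (NFrame.outerPop s) = [s] := rfl
@[simp] lemma fstk_callInner (s : S) : fstk (NFrame.callInner s) = [] := rfl
@[simp] lemma fstk_inner (s : S) (r : List S) : fstk (NFrame.inner s r) = [] := rfl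

lemma mem_stk_of_outer {s : S} {r : List S} {k : List (NFrame S)}
    (h : NFrame.outer s r ∈ k) : s ∈ stk k := by
  induction k with
  | nil => cases h
  | cons f k ih =>
    rcases List.mem_cons.mp h with h | h
    · subst h; simp
    · simp [ih h]

lemma mem_stk_of_pop {s : S} {k : List (NFrame S)}
    (h : NFrame.outerPop s ∈ k) : s ∈ stk k := by
  induction k with
  | nil => cases h
  | cons f k ih =>
    rcases List.mem_cons.mp h with h | h
    · subst h; simp
    · simp [ih h]

/-- The invariant maintained by the Cumulative NDFS machine. -/
structure NInv (G : NGraph S V) (c : NConfig S V) : Prop where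
  st_sub : c.stack ⊆ c.outer
  i_sub : c.inner ⊆ c.outer
  st_eq : ∀ s : S, s ∈ c.stack ↔ s ∈ stk c.ctrl
  nodup : (stk c.ctrl).Nodup
  oni : ∀ s r, NFrame.outer s r ∈ c.ctrl → s ∉ c.inner
  tclean : ∀ f ∈ c.ctrl.tail,
      (∀ s : S, f ≠ NFrame.callOuter s) ∧ (∀ s : S, f ≠ NFrame.callInner s)
  hco : ∀ s k, c.ctrl = NFrame.callOuter s :: k → s ∉ c.outer ∧ s ∉ c.stack
  hci : ∀ s k, c.ctrl = NFrame.callInner s :: k →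
      s ∈ c.outer ∧ s ∉ c.inner ∧ (∀ r, NFrame.outer s r ∉ c.ctrl) ∧
      ∀ s' ∈ G.succ s, s' ∈ c.outer ∨ G.C s' ⊆ c.found
  ifr : ∀ s r, NFrame.inner s r ∈ c.ctrl → ∀ s' ∈ r, s' ∈ c.outer ∨ G.C s' ⊆ c.found
  dsu : ∀ s ∈ c.outer, s ∉ c.stack → ∀ s' ∈ G.succ s, s' ∈ c.outer ∨ G.C s' ⊆ c.found
  ofr : ∀ s r, NFrame.outer s r ∈ c.ctrl → ∀ s' ∈ G.succ s,
      s' ∈ r ∨ s' ∈ c.outer ∨ G.C s' ⊆ c.found ∨ ∃ k, c.ctrl = NFrame.callOuter s' :: k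
  psu : ∀ s, NFrame.outerPop s ∈ c.ctrl → ∀ s' ∈ G.succ s,
      s' ∈ c.outer ∨ G.C s' ⊆ c.found

lemma ninv_init (G : NGraph S V) : NInv G (initConfig G) := by
  constructor <;> simp [initConfig]

lemma ninv_step {G : NGraph S V} {c c' : NConfig S V}
    (hI : NInv G c) (h : NStep G c c') : NInv G c' := by
  cases h with
  | callOuter F O I St s k =>
    obtain ⟨hsO, hsSt⟩ := hI.hco s k rfl
    have h0 : ∀ t, t ∈ St ↔ t ∈ stk k := fun t => by simpa using hI.st_eq t
    have hsk : s ∉ stk k := fun hs => hsSt ((h0 s).mpr hs)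
    refine ⟨Set.insert_subset_insert hI.st_sub, hI.i_sub.trans (Set.subset_insert _ _),
        ?_, ?_, ?_, ?_, ?_, ?_, ?_, ?_, ?_, ?_⟩
    · intro t; simp [h0 t]
    · simpa [hsk] using hI.nodup
    · intro t r ht
      rcases List.mem_cons.mp ht with ht | ht
      · cases ht; exact fun hs => hsO (hI.i_sub hs)
      · exact hI.oni t r (List.mem_cons_of_mem _ ht)
    · intro f hf; exact hI.tclean f hf
    · intro t k' he; simp at he
    · intro t k' he; simp at he
    · intro t r ht s' hs'
      rcases List.mem_cons.mp ht with ht | ht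
      · simp at ht
      · exact (hI.ifr t r (List.mem_cons_of_mem _ ht) s' hs').imp
          (Set.mem_insert_of_mem _) id
    · intro t htO htSt s' hs'
      rcases Set.mem_insert_iff.mp htO with rfl | htO
      · exact absurd (Set.mem_insert _ _) htSt
      · exact ((hI.dsu t htO (fun hts => htSt (Set.mem_insert_of_mem _ hts))) s' hs').imp
          (Set.mem_insert_of_mem _) id
    · intro t r ht s' hs'
      rcases List.mem_cons.mp ht with ht | ht
      · cases ht; exact Or.inl hs'
      · rcases hI.ofr t r (List.mem_cons_of_mem _ ht) s' hs' with h4 | h4 | h4 | ⟨k', hk'⟩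
        · exact Or.inl h4
        · exact Or.inr (Or.inl (Set.mem_insert_of_mem _ h4))
        · exact Or.inr (Or.inr (Or.inl h4))
        · obtain ⟨rfl, rfl⟩ : s' = s ∧ k' = k := by
            constructor <;> [skip; skip] <;> injection hk' with h1 h2 <;>
              first | (injection h1 with h1; exact h1.symm) | exact h2.symm
          exact Or.inr (Or.inl (Set.mem_insert _ _))
    · intro t ht s' hs'
      rcases List.mem_cons.mp ht with ht | ht
      · simp at ht
      · exact (hI.psu t (List.mem_cons_of_mem _ ht) s' hs').imp
          (Set.mem_insert_of_mem _) id
  | outerSkip F O I St s s' rest k hcond =>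
    refine ⟨hI.st_sub, hI.i_sub, ?_, ?_, ?_, ?_, ?_, ?_, ?_, hI.dsu, ?_, ?_⟩
    · intro t; simpa using hI.st_eq t
    · simpa using hI.nodup
    · intro t r ht
      rcases List.mem_cons.mp ht with ht | ht
      · cases ht; exact hI.oni s (s' :: rest) (List.mem_cons_self)
      · exact hI.oni t r (List.mem_cons_of_mem _ ht)
    · intro f hf; exact hI.tclean f hf
    · intro t k' he; simp at he
    · intro t k' he; simp at he
    · intro t r ht s'' hs''
      rcases List.mem_cons.mp ht with ht | ht
      · simp at ht
      · exact hI.ifr t r (List.mem_cons_of_mem _ ht) s'' hs''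
    · intro t r ht s'' hs''
      rcases List.mem_cons.mp ht with ht | ht
      · injection ht with h1 h2
        rcases hI.ofr t (s' :: r) (by rw [h1, h2]; exact List.mem_cons_self) s'' hs'' with
          h4 | h4 | h4 | ⟨k', hk'⟩
        · rcases List.mem_cons.mp h4 with rfl | h4
          · rcases hcond with hc | hc | hc
            · exact Or.inr (Or.inl hc)
            · exact Or.inr (Or.inl (hI.st_sub hc))
            · exact Or.inr (Or.inr (Or.inl hc))
          · exact Or.inl h4
        · exact Or.inr (Or.inl h4)
        · exact Or.inr (Or.inr (Or.inl h4))
        · simp at hk'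
      · rcases hI.ofr t r (List.mem_cons_of_mem _ ht) s'' hs'' with h4 | h4 | h4 | ⟨k', hk'⟩
        · exact Or.inl h4
        · exact Or.inr (Or.inl h4)
        · exact Or.inr (Or.inr (Or.inl h4))
        · simp at hk'
    · intro t ht s'' hs''
      rcases List.mem_cons.mp ht with ht | ht
      · simp at ht
      · exact hI.psu t (List.mem_cons_of_mem _ ht) s'' hs''
  | outerRec F O I St s s' rest k h1 h2 h3 =>
    refine ⟨hI.st_sub, hI.i_sub, ?_, ?_, ?_, ?_, ?_, ?_, ?_, hI.dsu, ?_, ?_⟩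
    · intro t; simpa using hI.st_eq t
    · simpa using hI.nodup
    · intro t r ht
      rcases List.mem_cons.mp ht with ht | ht
      · simp at ht
      rcases List.mem_cons.mp ht with ht | ht
      · cases ht; exact hI.oni s (s' :: rest) (List.mem_cons_self)
      · exact hI.oni t r (List.mem_cons_of_mem _ ht)
    · intro f hf
      rcases List.mem_cons.mp hf with rfl | hf
      · exact ⟨fun t => by simp, fun t => by simp⟩
      · exact hI.tclean f hf
    · intro t k' he
      obtain ⟨rfl, rfl⟩ : t = s' ∧ k' = NFrame.outer s rest :: k := by
        injection he with ha hb; injection ha with ha; exact ⟨ha.symm, hb.symm⟩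
      exact ⟨h1, h2⟩
    · intro t k' he; simp at he
    · intro t r ht s'' hs''
      simp only [List.mem_cons] at ht
      rcases ht with ht | ht | ht
      · simp at ht
      · simp at ht
      · exact hI.ifr t r (List.mem_cons_of_mem _ ht) s'' hs''
    · intro t r ht s'' hs''
      rcases List.mem_cons.mp ht with ht | ht
      · simp at ht
      rcases List.mem_cons.mp ht with ht | ht
      · injection ht with ha hb
        rcases hI.ofr t (s' :: r) (by rw [ha, hb]; exact List.mem_cons_self) s'' hs'' with
          h4 | h4 | h4 | ⟨k', hk'⟩
        · rcases List.mem_cons.mp h4 with rfl | h4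
          · exact Or.inr (Or.inr (Or.inr ⟨_, rfl⟩))
          · exact Or.inl h4
        · exact Or.inr (Or.inl h4)
        · exact Or.inr (Or.inr (Or.inl h4))
        · simp at hk'
      · rcases hI.ofr t r (List.mem_cons_of_mem _ ht) s'' hs'' with h4 | h4 | h4 | ⟨k', hk'⟩
        · exact Or.inl h4
        · exact Or.inr (Or.inl h4)
        · exact Or.inr (Or.inr (Or.inl h4))
        · simp at hk'
    · intro t ht s'' hs''
      simp only [List.mem_cons] at ht
      rcases ht with ht | ht | ht
      · simp at ht
      · simp at ht
      · exact hI.psu t (List.mem_cons_of_mem _ ht) s'' hs''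
  | outerAcc F O I St s k hacc hnf =>
    have hsSt : s ∈ St := (hI.st_eq s).mpr (by simp)
    have hnd : s ∉ stk k := by
      have := hI.nodup; simp at this; exact this.1
    have hsucc : ∀ s' ∈ G.succ s, s' ∈ O ∨ G.C s' ⊆ F := by
      intro s' hs'
      rcases hI.ofr s [] (List.mem_cons_self) s' hs' with h4 | h4 | h4 | ⟨k', hk'⟩
      · simp at h4
      · exact Or.inl h4
      · exact Or.inr h4
      · simp at hk'
    refine ⟨hI.st_sub, hI.i_sub, ?_, ?_, ?_, ?_, ?_, ?_, ?_, hI.dsu, ?_, ?_⟩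
    · intro t; simpa using hI.st_eq t
    · simpa using hI.nodup
    · intro t r ht
      simp only [List.mem_cons] at ht
      rcases ht with ht | ht | ht
      · simp at ht
      · simp at ht
      · exact hI.oni t r (List.mem_cons_of_mem _ ht)
    · intro f hf
      rcases List.mem_cons.mp hf with rfl | hf
      · exact ⟨fun t => by simp, fun t => by simp⟩
      · exact hI.tclean f hf
    · intro t k' he; simp at he
    · intro t k' he
      injection he with ha hb
      injection ha with ha
      rw [← ha]
      refine ⟨hI.st_sub hsSt, hI.oni s [] (List.mem_cons_self), ?_, hsucc⟩
      intro r hr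
      rcases List.mem_cons.mp hr with hr | hr
      · simp at hr
      rcases List.mem_cons.mp hr with hr | hr
      · simp at hr
      · exact hnd (mem_stk_of_outer hr)
    · intro t r ht s'' hs''
      simp only [List.mem_cons] at ht
      rcases ht with ht | ht | ht
      · simp at ht
      · simp at ht
      · exact hI.ifr t r (List.mem_cons_of_mem _ ht) s'' hs''
    · intro t r ht s'' hs''
      simp only [List.mem_cons] at ht
      rcases ht with ht | ht | ht
      · simp at ht
      · simp at ht
      · rcases hI.ofr t r (List.mem_cons_of_mem _ ht) s'' hs'' with h4 | h4 | h4 | ⟨k', hk'⟩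
        · exact Or.inl h4
        · exact Or.inr (Or.inl h4)
        · exact Or.inr (Or.inr (Or.inl h4))
        · simp at hk'
    · intro t ht s'' hs''
      simp only [List.mem_cons] at ht
      rcases ht with ht | ht | ht
      · simp at ht
      · cases ht; exact hsucc s'' hs''
      · exact hI.psu t (List.mem_cons_of_mem _ ht) s'' hs''
  | outerDone F O I St s k hcond =>
    have hnd : s ∉ stk k := by
      have := hI.nodup; simp at this; exact this.1
    have hsO : s ∈ O := hI.st_sub ((hI.st_eq s).mpr (by simp))
    have hsucc : ∀ s' ∈ G.succ s, s' ∈ O ∨ G.C s' ⊆ F := by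
      intro s' hs'
      rcases hI.ofr s [] (List.mem_cons_self) s' hs' with h4 | h4 | h4 | ⟨k', hk'⟩
      · simp at h4
      · exact Or.inl h4
      · exact Or.inr h4
      · simp at hk'
    refine ⟨fun t ht => hI.st_sub ht.1, hI.i_sub, ?_, ?_, ?_, ?_, ?_, ?_, ?_, ?_, ?_, ?_⟩
    · intro t
      constructor
      · rintro ⟨htSt, htn⟩
        have := (hI.st_eq t).mp htSt
        simp only [stk_cons, fstk_outer, List.mem_append, List.mem_singleton] at this
        rcases this with rfl | h
        · exact absurd rfl htn
        · exact h
      · intro ht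
        refine ⟨(hI.st_eq t).mpr (by simp [ht]), ?_⟩
        rintro rfl; exact hnd ht
    · have := hI.nodup; simp at this; exact this.2
    · intro t r ht; exact hI.oni t r (List.mem_cons_of_mem _ ht)
    · intro f hf; exact hI.tclean f (List.mem_of_mem_tail hf)
    · intro t k' he
      exact absurd rfl ((hI.tclean _ (by
        simp only [List.tail_cons]
        rw [show k = NFrame.callOuter t :: k' from he]
        exact List.mem_cons_self)).1 t)
    · intro t k' he
      exact absurd rfl ((hI.tclean _ (by
        simp only [List.tail_cons]
        rw [show k = NFrame.callInner t :: k' from he]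
        exact List.mem_cons_self)).2 t)
    · intro t r ht; exact hI.ifr t r (List.mem_cons_of_mem _ ht)
    · intro t htO htSt s'' hs''
      by_cases hts : t = s
      · subst hts; exact hsucc s'' hs''
      · refine hI.dsu t htO ?_ s'' hs''
        intro htSt'; exact htSt ⟨htSt', hts⟩
    · intro t r ht s'' hs''
      rcases hI.ofr t r (List.mem_cons_of_mem _ ht) s'' hs'' with h4 | h4 | h4 | ⟨k', hk'⟩
      · exact Or.inl h4
      · exact Or.inr (Or.inl h4)
      · exact Or.inr (Or.inr (Or.inl h4))
      · simp at hk'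
    · intro t ht; exact hI.psu t (List.mem_cons_of_mem _ ht)
  | outerPop F O I St s k =>
    have hnd : s ∉ stk k := by
      have := hI.nodup; simp at this; exact this.1
    have hsucc : ∀ s' ∈ G.succ s, s' ∈ O ∨ G.C s' ⊆ F :=
      hI.psu s (List.mem_cons_self)
    refine ⟨fun t ht => hI.st_sub ht.1, hI.i_sub, ?_, ?_, ?_, ?_, ?_, ?_, ?_, ?_, ?_, ?_⟩
    · intro t
      constructor
      · rintro ⟨htSt, htn⟩
        have := (hI.st_eq t).mp htSt
        simp only [stk_cons, fstk_outerPop, List.mem_append, List.mem_singleton] at this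
        rcases this with rfl | h
        · exact absurd rfl htn
        · exact h
      · intro ht
        refine ⟨(hI.st_eq t).mpr (by simp [ht]), ?_⟩
        rintro rfl; exact hnd ht
    · have := hI.nodup; simp at this; exact this.2
    · intro t r ht; exact hI.oni t r (List.mem_cons_of_mem _ ht)
    · intro f hf; exact hI.tclean f (List.mem_of_mem_tail hf)
    · intro t k' he
      exact absurd rfl ((hI.tclean _ (by
        simp only [List.tail_cons]
        rw [show k = NFrame.callOuter t :: k' from he]
        exact List.mem_cons_self)).1 t)
    · intro t k' he
      exact absurd rfl ((hI.tclean _ (by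
        simp only [List.tail_cons]
        rw [show k = NFrame.callInner t :: k' from he]
        exact List.mem_cons_self)).2 t)
    · intro t r ht; exact hI.ifr t r (List.mem_cons_of_mem _ ht)
    · intro t htO htSt s'' hs''
      by_cases hts : t = s
      · subst hts; exact hsucc s'' hs''
      · refine hI.dsu t htO ?_ s'' hs''
        intro htSt'; exact htSt ⟨htSt', hts⟩
    · intro t r ht s'' hs''
      rcases hI.ofr t r (List.mem_cons_of_mem _ ht) s'' hs'' with h4 | h4 | h4 | ⟨k', hk'⟩
      · exact Or.inl h4
      · exact Or.inr (Or.inl h4)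
      · exact Or.inr (Or.inr (Or.inl h4))
      · simp at hk'
    · intro t ht; exact hI.psu t (List.mem_cons_of_mem _ ht)
  | callInner F O I St s k =>
    obtain ⟨hsO, hsI, hnof, hsucc⟩ := hI.hci s k rfl
    refine ⟨hI.st_sub, Set.insert_subset_iff.mpr ⟨hsO, hI.i_sub⟩,
        ?_, ?_, ?_, ?_, ?_, ?_, ?_, hI.dsu, ?_, ?_⟩
    · intro t; simpa using hI.st_eq t
    · simpa using hI.nodup
    · intro t r ht
      rcases List.mem_cons.mp ht with hteq | htk
      · simp at hteq
      · intro hmem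
        rcases Set.mem_insert_iff.mp hmem with rfl | hmem
        · exact hnof r (List.mem_cons_of_mem _ htk)
        · exact hI.oni t r (List.mem_cons_of_mem _ htk) hmem
    · intro f hf; exact hI.tclean f hf
    · intro t k' he; simp at he
    · intro t k' he; simp at he
    · intro t r ht s'' hs''
      rcases List.mem_cons.mp ht with ht | ht
      · injection ht with ha hb
        exact hsucc s'' (hb ▸ hs'')
      · exact hI.ifr t r (List.mem_cons_of_mem _ ht) s'' hs''
    · intro t r ht s'' hs''
      rcases List.mem_cons.mp ht with ht | ht
      · simp at ht
      · rcases hI.ofr t r (List.mem_cons_of_mem _ ht) s'' hs'' with h4 | h4 | h4 | ⟨k', hk'⟩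
        · exact Or.inl h4
        · exact Or.inr (Or.inl h4)
        · exact Or.inr (Or.inr (Or.inl h4))
        · simp at hk'
    · intro t ht s'' hs''
      rcases List.mem_cons.mp ht with ht | ht
      · simp at ht
      · exact hI.psu t (List.mem_cons_of_mem _ ht) s'' hs''
  | innerFound F O I St s s' rest k hmem =>
    refine ⟨hI.st_sub, hI.i_sub, ?_, ?_, ?_, ?_, ?_, ?_, ?_, ?_, ?_, ?_⟩
    · intro t; simpa using hI.st_eq t
    · simpa using hI.nodup
    · intro t r ht; exact hI.oni t r (List.mem_cons_of_mem _ ht)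
    · intro f hf; exact hI.tclean f (List.mem_of_mem_tail hf)
    · intro t k' he
      exact absurd rfl ((hI.tclean _ (by
        simp only [List.tail_cons]
        rw [show k = NFrame.callOuter t :: k' from he]
        exact List.mem_cons_self)).1 t)
    · intro t k' he
      exact absurd rfl ((hI.tclean _ (by
        simp only [List.tail_cons]
        rw [show k = NFrame.callInner t :: k' from he]
        exact List.mem_cons_self)).2 t)
    · intro t r ht s'' hs''
      exact (hI.ifr t r (List.mem_cons_of_mem _ ht) s'' hs'').imp id
        (fun h => h.trans Set.subset_union_left)
    · intro t htO htSt s'' hs''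
      exact (hI.dsu t htO htSt s'' hs'').imp id (fun h => h.trans Set.subset_union_left)
    · intro t r ht s'' hs''
      rcases hI.ofr t r (List.mem_cons_of_mem _ ht) s'' hs'' with h4 | h4 | h4 | ⟨k', hk'⟩
      · exact Or.inl h4
      · exact Or.inr (Or.inl h4)
      · exact Or.inr (Or.inr (Or.inl (h4.trans Set.subset_union_left)))
      · simp at hk'
    · intro t ht s'' hs''
      exact (hI.psu t (List.mem_cons_of_mem _ ht) s'' hs'').imp id
        (fun h => h.trans Set.subset_union_left)
  | innerRec F O I St s s' rest k h1 h2 h3 =>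
    have hs'O : s' ∈ O := by
      rcases hI.ifr s (s' :: rest) (List.mem_cons_self) s'
        (List.mem_cons_self) with h | h
      · exact h
      · exact absurd h h3
    refine ⟨hI.st_sub, hI.i_sub, ?_, ?_, ?_, ?_, ?_, ?_, ?_, hI.dsu, ?_, ?_⟩
    · intro t; simpa using hI.st_eq t
    · simpa using hI.nodup
    · intro t r ht
      simp only [List.mem_cons] at ht
      rcases ht with ht | ht | ht
      · simp at ht
      · simp at ht
      · exact hI.oni t r (List.mem_cons_of_mem _ ht)
    · intro f hf
      rcases List.mem_cons.mp hf with rfl | hf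
      · exact ⟨fun t => by simp, fun t => by simp⟩
      · exact hI.tclean f hf
    · intro t k' he; simp at he
    · intro t k' he
      injection he with ha hb
      injection ha with ha
      rw [← ha]
      refine ⟨hs'O, h2, ?_, hI.dsu s' hs'O h1⟩
      intro r hr
      rcases List.mem_cons.mp hr with hr | hr
      · simp at hr
      rcases List.mem_cons.mp hr with hr | hr
      · simp at hr
      · exact h1 ((hI.st_eq s').mpr (by simp [mem_stk_of_outer hr]))
    · intro t r ht s'' hs''
      rcases List.mem_cons.mp ht with ht | ht
      · simp at ht
      rcases List.mem_cons.mp ht with ht | ht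
      · injection ht with hx hy
        exact hI.ifr t (s' :: r) (by rw [hx, hy]; exact List.mem_cons_self) s''
          (List.mem_cons_of_mem _ hs'')
      · exact hI.ifr t r (List.mem_cons_of_mem _ ht) s'' hs''
    · intro t r ht s'' hs''
      simp only [List.mem_cons] at ht
      rcases ht with ht | ht | ht
      · simp at ht
      · simp at ht
      · rcases hI.ofr t r (List.mem_cons_of_mem _ ht) s'' hs'' with h4 | h4 | h4 | ⟨k', hk'⟩
        · exact Or.inl h4
        · exact Or.inr (Or.inl h4)
        · exact Or.inr (Or.inr (Or.inl h4))
        · simp at hk'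
    · intro t ht s'' hs''
      simp only [List.mem_cons] at ht
      rcases ht with ht | ht | ht
      · simp at ht
      · simp at ht
      · exact hI.psu t (List.mem_cons_of_mem _ ht) s'' hs''
  | innerSkip F O I St s s' rest k h1 h2 =>
    refine ⟨hI.st_sub, hI.i_sub, ?_, ?_, ?_, ?_, ?_, ?_, ?_, hI.dsu, ?_, ?_⟩
    · intro t; simpa using hI.st_eq t
    · simpa using hI.nodup
    · intro t r ht
      rcases List.mem_cons.mp ht with ht | ht
      · simp at ht
      · exact hI.oni t r (List.mem_cons_of_mem _ ht)
    · intro f hf; exact hI.tclean f hf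
    · intro t k' he; simp at he
    · intro t k' he; simp at he
    · intro t r ht s'' hs''
      rcases List.mem_cons.mp ht with ht | ht
      · injection ht with ha hb
        exact hI.ifr t (s' :: r) (by rw [ha, hb]; exact List.mem_cons_self) s''
          (List.mem_cons_of_mem _ hs'')
      · exact hI.ifr t r (List.mem_cons_of_mem _ ht) s'' hs''
    · intro t r ht s'' hs''
      rcases List.mem_cons.mp ht with ht | ht
      · simp at ht
      · rcases hI.ofr t r (List.mem_cons_of_mem _ ht) s'' hs'' with h4 | h4 | h4 | ⟨k', hk'⟩
        · exact Or.inl h4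
        · exact Or.inr (Or.inl h4)
        · exact Or.inr (Or.inr (Or.inl h4))
        · simp at hk'
    · intro t ht s'' hs''
      rcases List.mem_cons.mp ht with ht | ht
      · simp at ht
      · exact hI.psu t (List.mem_cons_of_mem _ ht) s'' hs''
  | innerDone F O I St s k =>
    refine ⟨hI.st_sub, hI.i_sub, ?_, ?_, ?_, ?_, ?_, ?_, ?_, hI.dsu, ?_, ?_⟩
    · intro t; simpa using hI.st_eq t
    · simpa using hI.nodup
    · intro t r ht; exact hI.oni t r (List.mem_cons_of_mem _ ht)
    · intro f hf; exact hI.tclean f (List.mem_of_mem_tail hf)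
    · intro t k' he
      exact absurd rfl ((hI.tclean _ (by
        simp only [List.tail_cons]
        rw [show k = NFrame.callOuter t :: k' from he]
        exact List.mem_cons_self)).1 t)
    · intro t k' he
      exact absurd rfl ((hI.tclean _ (by
        simp only [List.tail_cons]
        rw [show k = NFrame.callInner t :: k' from he]
        exact List.mem_cons_self)).2 t)
    · intro t r ht; exact hI.ifr t r (List.mem_cons_of_mem _ ht)
    · intro t r ht s'' hs''
      rcases hI.ofr t r (List.mem_cons_of_mem _ ht) s'' hs'' with h4 | h4 | h4 | ⟨k', hk'⟩
      · exact Or.inl h4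
      · exact Or.inr (Or.inl h4)
      · exact Or.inr (Or.inr (Or.inl h4))
      · simp at hk'
    · intro t ht; exact hI.psu t (List.mem_cons_of_mem _ ht)

/-- Weight of a control frame. -/
def wfr : NFrame S → ℕ
  | .callOuter _ => 0
  | .outer _ r => r.length + 2
  | .outerPop _ => 1
  | .callInner _ => 0
  | .inner _ r => r.length + 1

/-- Weight of a control stack. -/
def wct (k : List (NFrame S)) : ℕ := (k.map wfr).sum

lemma ncard_compl_le [Finite S] {A B : Set S} (h : A ⊆ B) : Bᶜ.ncard ≤ Aᶜ.ncard :=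
  Set.ncard_le_ncard (Set.compl_subset_compl.mpr h) (Set.toFinite _)

lemma ncard_compl_insert_lt [Finite S] {A : Set S} {s : S} (h : s ∉ A) :
    ((insert s A)ᶜ).ncard < Aᶜ.ncard := by
  refine Set.ncard_lt_ncard ?_ (Set.toFinite _)
  refine (Set.ssubset_iff_of_subset (Set.compl_subset_compl.mpr (Set.subset_insert s A))).mpr
    ⟨s, h, by simp⟩

lemma nstep_decr [Finite S] {G : NGraph S V} {c c' : NConfig S V}
    (hI : NInv G c) (h : NStep G c c') :
    (c'.outerᶜ.ncard ≤ c.outerᶜ.ncard ∧ c'.innerᶜ.ncard ≤ c.innerᶜ.ncard) ∧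
    (c'.outerᶜ.ncard = c.outerᶜ.ncard → c'.innerᶜ.ncard = c.innerᶜ.ncard →
      wct c'.ctrl < wct c.ctrl) := by
  cases h with
  | callOuter F O I St s k =>
    have hlt := ncard_compl_insert_lt (hI.hco s k rfl).1
    exact ⟨⟨hlt.le, le_rfl⟩, fun h1 _ => absurd h1 (Nat.ne_of_lt hlt)⟩
  | callInner F O I St s k =>
    have hlt := ncard_compl_insert_lt (hI.hci s k rfl).2.1
    exact ⟨⟨le_rfl, hlt.le⟩, fun _ h2 => absurd h2 (Nat.ne_of_lt hlt)⟩
  | outerSkip F O I St s s' rest k hcond =>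
    exact ⟨⟨le_rfl, le_rfl⟩, fun _ _ => by simp [wct, wfr]⟩
  | outerRec F O I St s s' rest k h1 h2 h3 =>
    exact ⟨⟨le_rfl, le_rfl⟩, fun _ _ => by simp [wct, wfr]⟩
  | outerAcc F O I St s k hacc hnf =>
    exact ⟨⟨le_rfl, le_rfl⟩, fun _ _ => by simp [wct, wfr]⟩
  | outerDone F O I St s k hcond =>
    exact ⟨⟨le_rfl, le_rfl⟩, fun _ _ => by simp [wct, wfr]⟩
  | outerPop F O I St s k =>
    exact ⟨⟨le_rfl, le_rfl⟩, fun _ _ => by simp [wct, wfr]⟩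
  | innerFound F O I St s s' rest k hmem =>
    exact ⟨⟨le_rfl, le_rfl⟩, fun _ _ => by simp [wct, wfr]⟩
  | innerRec F O I St s s' rest k h1 h2 h3 =>
    exact ⟨⟨le_rfl, le_rfl⟩, fun _ _ => by simp [wct, wfr]⟩
  | innerSkip F O I St s s' rest k h1 h2 =>
    exact ⟨⟨le_rfl, le_rfl⟩, fun _ _ => by simp [wct, wfr]⟩
  | innerDone F O I St s k =>
    exact ⟨⟨le_rfl, le_rfl⟩, fun _ _ => by simp [wct, wfr]⟩

lemma no_infinite_run [Finite S] (G : NGraph S V) :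
    ¬ ∃ f : ℕ → NConfig S V, f 0 = initConfig G ∧ ∀ i, NStep G (f i) (f (i + 1)) := by
  rintro ⟨f, h0, hstep⟩
  have hInv : ∀ i, NInv G (f i) := by
    intro i; induction i with
    | zero => rw [h0]; exact ninv_init G
    | succ n ih => exact ninv_step ih (hstep n)
  let a : ℕ → ℕ := fun i => ((f i).outerᶜ).ncard
  let b : ℕ → ℕ := fun i => ((f i).innerᶜ).ncard
  let w : ℕ → ℕ := fun i => wct (f i).ctrl
  have hd : ∀ i, (a (i + 1) ≤ a i ∧ b (i + 1) ≤ b i) ∧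
      (a (i + 1) = a i → b (i + 1) = b i → w (i + 1) < w i) :=
    fun i => nstep_decr (hInv i) (hstep i)
  have hstepa : ∀ i, a (i + 1) ≤ a i := fun i => (hd i).1.1
  have hstepb : ∀ i, b (i + 1) ≤ b i := fun i => (hd i).1.2
  have hg : ∀ i j, i ≤ j → a j + b j ≤ a i + b i := by
    intro i j hij
    induction j, hij using Nat.le_induction with
    | base => exact le_rfl
    | succ n hn ih => exact le_trans (by have := hstepa n; have := hstepb n; omega) ih
  obtain ⟨N, hNmem⟩ : ∃ N, a N + b N = sInf (Set.range fun i => a i + b i) := by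
    obtain ⟨N, hN⟩ := Set.mem_range.mp
      (Nat.sInf_mem (Set.range_nonempty (fun i => a i + b i)))
    exact ⟨N, hN⟩
  have hNle : ∀ j, a N + b N ≤ a j + b j := by
    intro j; rw [hNmem]; exact Nat.sInf_le ⟨j, rfl⟩
  have hconst : ∀ j, N ≤ j → a j = a N ∧ b j = b N := by
    intro j hj
    have h1 := hg N j hj
    have h2 := hNle j
    have h3 : ∀ i k, i ≤ k → a k ≤ a i := by
      intro i k hik
      induction k, hik using Nat.le_induction with
      | base => exact le_rfl
      | succ m hm ih => exact le_trans (hstepa m) ih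
    have h4 : ∀ i k, i ≤ k → b k ≤ b i := by
      intro i k hik
      induction k, hik using Nat.le_induction with
      | base => exact le_rfl
      | succ m hm ih => exact le_trans (hstepb m) ih
    have := h3 N j hj
    have := h4 N j hj
    omega
  have hwdec : ∀ j, N ≤ j → w (j + 1) < w j := by
    intro j hj
    have h1 := hconst j hj
    have h2 := hconst (j + 1) (le_trans hj (Nat.le_succ j))
    exact (hd j).2 (by omega) (by omega)
  have hbound : ∀ t, w (N + t) + t ≤ w N := by
    intro t
    induction t with
    | zero => simp
    | succ m ih =>
      have := hwdec (N + m) (Nat.le_add_right N m)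
      have heq : N + (m + 1) = N + m + 1 := by omega
      rw [heq]
      omega
  have := hbound (w N + 1)
  omega

lemma nstep_progress (G : NGraph S V) (c : NConfig S V) (hne : c.ctrl ≠ []) :
    ∃ c', NStep G c c' := by
  obtain ⟨F, O, I, St, ctrl⟩ := c
  match ctrl with
  | [] => exact absurd rfl hne
  | NFrame.callOuter s :: k => exact ⟨_, NStep.callOuter F O I St s k⟩
  | NFrame.outer s [] :: k =>
    by_cases h : G.acc s ∧ ¬ G.C s ⊆ F
    · exact ⟨_, NStep.outerAcc F O I St s k h.1 h.2⟩
    · exact ⟨_, NStep.outerDone F O I St s k h⟩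
  | NFrame.outer s (s' :: rest) :: k =>
    by_cases h : s' ∈ O ∨ s' ∈ St ∨ G.C s' ⊆ F
    · exact ⟨_, NStep.outerSkip F O I St s s' rest k h⟩
    · push_neg at h
      exact ⟨_, NStep.outerRec F O I St s s' rest k h.1 h.2.1 h.2.2⟩
  | NFrame.outerPop s :: k => exact ⟨_, NStep.outerPop F O I St s k⟩
  | NFrame.callInner s :: k => exact ⟨_, NStep.callInner F O I St s k⟩
  | NFrame.inner s [] :: k => exact ⟨_, NStep.innerDone F O I St s k⟩
  | NFrame.inner s (s' :: rest) :: k =>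
    by_cases hSt : s' ∈ St
    · exact ⟨_, NStep.innerFound F O I St s s' rest k hSt⟩
    · by_cases h2 : s' ∈ I ∨ G.C s' ⊆ F
      · exact ⟨_, NStep.innerSkip F O I St s s' rest k hSt h2⟩
      · push_neg at h2
        exact ⟨_, NStep.innerRec F O I St s s' rest k hSt h2.1 h2.2⟩

/-- On any finite input graph the Cumulative NDFS algorithm always
terminates: the computation cannot proceed infinitely, and a final configuration is
reached. -/
theorem cumulative_ndfs_terminates
    [Finite S] (G : NGraph S V) :
    (¬ ∃ f : ℕ → NConfig S V, f 0 = initConfig G ∧ ∀ i, NStep G (f i) (f (i + 1))) ∧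
    ∃ c : NConfig S V, ReflTransGen (NStep G) (initConfig G) c ∧ c.ctrl = [] := by
  refine ⟨no_infinite_run G, ?_⟩
  by_contra hno
  push_neg at hno
  have key : ∀ p : {c : NConfig S V // ReflTransGen (NStep G) (initConfig G) c},
      ∃ c', NStep G p.1 c' :=
    fun p => nstep_progress G p.1 (hno p.1 p.2)
  let g : {c : NConfig S V // ReflTransGen (NStep G) (initConfig G) c} →
      {c : NConfig S V // ReflTransGen (NStep G) (initConfig G) c} :=
    fun p => ⟨(key p).choose, p.2.tail (key p).choose_spec⟩
  let f : ℕ → {c : NConfig S V // ReflTransGen (NStep G) (initConfig G) c} :=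
    fun n => g^[n] ⟨initConfig G, ReflTransGen.refl⟩
  refine no_infinite_run G ⟨fun n => (f n).1, ?_, ?_⟩
  · simp [f]
  · intro n
    have hsucc : f (n + 1) = g (f n) := Function.iterate_succ_apply' g n _
    show NStep G (f n).1 (f (n + 1)).1
    rw [hsucc]
    exact (key (f n)).choose_spec

end PTASynth
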